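/- A domain D is sharp if and only if for every two nonzero ideals I, H of D, one has I = (I : (I : H)) · (I : H). -/

import Mathlib

set_option maxHeartbeats 1000000

/-- A domain `R` is *sharp* if whenever `I ⊇ A*B` with `I, A, B` nonzero ideals,
there exist ideals `A' ⊇ A` and `B' ⊇ B` such that `I = A'*B'`. -/
def IsSharpDomain (R : Type*) [CommRing R] : Prop :=
  ∀ I A B : Ideal R, I ≠ ⊥ → A ≠ ⊥ → B ≠ ⊥ → A * B ≤ I →
    ∃ A' B' : Ideal R, A ≤ A' ∧ B ≤ B' ∧ I = A' * B'

lemma mul_le_iff_le_colon {R : Type*} [CommRing R] {A B I : Ideal R} :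
    A * B ≤ I ↔ A ≤ I.colon B := by
  rw [Ideal.mul_le]
  constructor
  · intro h a ha
    exact Submodule.mem_colon.2 fun b hb => h a ha b hb
  · intro h a ha b hb
    exact Submodule.mem_colon.1 (h ha) b hb

theorem sharp_iff_colon (R : Type*) [CommRing R] [IsDomain R] :
    IsSharpDomain R ↔
      ∀ I H : Ideal R, I ≠ ⊥ → H ≠ ⊥ →
        I = (I.colon (I.colon H)) * (I.colon H) := by
  constructor
  · intro hs I H hI hH
    have hIcol : I ≤ I.colon H := by
      rw [← mul_le_iff_le_colon]
      exact Ideal.mul_le_left.trans le_rfl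
    have hcolne : I.colon H ≠ ⊥ := fun h => hI (le_bot_iff.1 (h ▸ hIcol))
    have hmul : (I.colon H) * H ≤ I := mul_le_iff_le_colon.2 le_rfl
    obtain ⟨A', B', hA', hB', hIeq⟩ := hs I (I.colon H) H hI hcolne hH hmul
    have hA'le : A' ≤ I.colon H := by
      rw [← mul_le_iff_le_colon]
      calc A' * H ≤ A' * B' := Ideal.mul_mono_right hB'
        _ = I := hIeq.symm
    have hA'eq : A' = I.colon H := le_antisymm hA'le hA'
    have hB'le : B' ≤ I.colon (I.colon H) := by
      rw [← mul_le_iff_le_colon]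
      rw [mul_comm]
      rw [← hA'eq]
      exact hIeq.ge
    have h1 : I = (I.colon H) * B' := by rw [← hA'eq]; exact hIeq
    refine le_antisymm ?_ (mul_le_iff_le_colon.2 le_rfl)
    calc I = (I.colon H) * B' := h1
      _ ≤ (I.colon H) * (I.colon (I.colon H)) := Ideal.mul_mono_right hB'le
      _ = (I.colon (I.colon H)) * (I.colon H) := mul_comm _ _
  · intro h I A B hI hA hB hAB
    refine ⟨I.colon B, I.colon (I.colon B), mul_le_iff_le_colon.1 hAB,
      mul_le_iff_le_colon.1 ?_, ?_⟩
    · rw [mul_comm]; exact mul_le_iff_le_colon.2 le_rfl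
    · rw [mul_comm]; exact h I B hI hB
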